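/- Let d = ⟨d_0, …, d_{ℓ−1}⟩ be an extended regular digit string. Then the sum of its digits satisfies Σ_{i<ℓ} d_i ≤ 2ℓ. -/

import Mathlib

/-- The value `Σ_{i<ℓ} d_i · 2^i` of a digit string. -/
def digitVal (d : List ℕ) : ℕ := ∑ i ∈ Finset.range d.length, d.getD i 0 * 2 ^ i

/-- A digit string `⟨d_0, …, d_{ℓ−1}⟩` is extended regular if
(i) every `3` is preceded by a `0` or a `1` with only `2`'s in between, and
(ii) every `0` is preceded by a `2` or a `3` with only `1`'s in between. -/
def ExtReg (d : List ℕ) : Prop :=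
  (∀ j < d.length, d.getD j 0 = 3 →
      ∃ k < j, (d.getD k 0 = 0 ∨ d.getD k 0 = 1) ∧
        ∀ m, k < m → m < j → d.getD m 0 = 2) ∧
  (∀ j < d.length, d.getD j 0 = 0 →
      ∃ k < j, (d.getD k 0 = 2 ∨ d.getD k 0 = 3) ∧
        ∀ m, k < m → m < j → d.getD m 0 = 1)

lemma sum_getD (d : List ℕ) : ∑ i ∈ Finset.range d.length, d.getD i 0 = d.sum := by
  induction d with
  | nil => simp
  | cons a l ih =>
    rw [List.length_cons, Finset.sum_range_succ']
    simp only [List.getD_cons_succ, List.getD_cons_zero, ih, List.sum_cons]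
    omega

/-- The sum of the digits of an extended regular digit string of length `ℓ`
is at most `2ℓ`. -/
theorem stmt_15 (d : List ℕ) (hdig : ∀ x ∈ d, x ≤ 3) (hreg : ExtReg d) :
    d.sum ≤ 2 * d.length := by
  classical
  set ℓ := d.length with hℓ
  set T : Finset ℕ := (Finset.range ℓ).filter (fun j => d.getD j 0 = 3) with hT
  set S : Finset ℕ := (Finset.range ℓ).filter (fun j => d.getD j 0 ≤ 1) with hS
  -- choice function
  let P : ℕ → ℕ → Prop := fun j k =>
    k < j ∧ (d.getD k 0 = 0 ∨ d.getD k 0 = 1) ∧ ∀ m, k < m → m < j → d.getD m 0 = 2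
  let f : ℕ → ℕ := fun j => if h : ∃ k, P j k then h.choose else 0
  have hfspec : ∀ j ∈ T, P j (f j) := by
    intro j hj
    rw [hT, Finset.mem_filter, Finset.mem_range] at hj
    obtain ⟨k, hk, h1, h2⟩ := hreg.1 j hj.1 hj.2
    have h : ∃ k, P j k := ⟨k, hk, h1, h2⟩
    simp only [f, dif_pos h]
    exact h.choose_spec
  have hTS : T.card ≤ S.card := by
    apply Finset.card_le_card_of_injOn f
    · intro j hj
      obtain ⟨h1, h2, _⟩ := hfspec j hj
      rw [hT, Finset.mem_coe, Finset.mem_filter, Finset.mem_range] at hj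
      rw [hS, Finset.mem_coe, Finset.mem_filter, Finset.mem_range]
      exact ⟨lt_trans h1 hj.1, by omega⟩
    · have key : ∀ j ∈ T, ∀ j' ∈ T, j < j' → f j ≠ f j' := by
        intro j hj j' hj' hlt hff
        obtain ⟨h1, h2, h3⟩ := hfspec j hj
        obtain ⟨h1', h2', h3'⟩ := hfspec j' hj'
        have : d.getD j 0 = 2 := h3' j (hff ▸ h1) hlt
        rw [hT, Finset.mem_filter] at hj
        omega
      intro j hj j' hj' hff
      by_contra hne
      rcases lt_or_gt_of_ne hne with h | h
      · exact key j (Finset.mem_coe.mp hj) j' (Finset.mem_coe.mp hj') h hff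
      · exact key j' (Finset.mem_coe.mp hj') j (Finset.mem_coe.mp hj) h hff.symm
  have hpt : ∀ i ∈ Finset.range ℓ,
      d.getD i 0 + (if d.getD i 0 ≤ 1 then 1 else 0) ≤
        2 + (if d.getD i 0 = 3 then 1 else 0) := by
    intro i hi
    rw [Finset.mem_range] at hi
    have : d.getD i 0 ≤ 3 := by
      have h := List.getD_eq_getElem d 0 hi
      rw [h]
      exact hdig _ (List.getElem_mem hi)
    split <;> split <;> omega
  have hsum := Finset.sum_le_sum hpt
  rw [Finset.sum_add_distrib, Finset.sum_add_distrib, Finset.sum_const,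
    ← Finset.card_filter, ← Finset.card_filter] at hsum
  have hd : d.sum = ∑ i ∈ Finset.range ℓ, d.getD i 0 := (sum_getD d).symm
  rw [Finset.card_range, smul_eq_mul] at hsum
  rw [hd]
  rw [← hS, ← hT] at hsum
  omega
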